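/- Truncation invariance of the dynamic block: Fix 1 ≤ t < T and suppose (a) for m ∈ {1,2}, R_T^{(m)}(x) = P·R_t^{(m)}(x)·P^⊤ where P = [I_t; 0] (extension consistency), and (b) the normalization scalars satisfy ρ_T([z,0]) = ρ_t(z) for all z ∈ R^{1×t} (padding invariance). Define, at each length ℓ, h_ℓ(x;X) = x·L^{(1)}(x)·X^⊤·R_ℓ^{(1)}(x) ∈ R^{1×ℓ} and o_ℓ(x;X) = σ_ℓ(h_ℓ(x;X))·R_ℓ^{(2)⊤}(x)·X·L^{(2)⊤}(x), where σ_ℓ(z) = (1/ρ_ℓ(z))·ReLU(z). Then for every x ∈ R^{1×d} and every X̃ ∈ R^{T×d}, letting X = P^⊤X̃ be its first t rows, o_T(x; X̃) = o_t(x; X). -/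
import Mathlib


open Matrix

private lemma vecMul_padP {t T : ℕ} (htT : t < T) (P : Matrix (Fin T) (Fin t) ℝ)
    (hP : ∀ i j, P i j = if (i : ℕ) = (j : ℕ) then 1 else 0) (z : Fin t → ℝ) :
    Matrix.vecMul z Pᵀ = fun i : Fin T => if hi : (i : ℕ) < t then z ⟨(i : ℕ), hi⟩ else 0 := by
  funext i
  simp only [Matrix.vecMul, dotProduct, Matrix.transpose_apply, hP]
  by_cases hi : (i : ℕ) < t
  · rw [Finset.sum_eq_single (⟨(i : ℕ), hi⟩ : Fin t)]
    · simp [hi]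
    · intro j _ hj
      have : (i : ℕ) ≠ (j : ℕ) := by
        intro h; exact hj (by ext; simp [h])
      simp [this]
    · simp
  · simp only [hi, dif_neg, not_false_iff]
    apply Finset.sum_eq_zero
    intro j _
    have : (i : ℕ) ≠ (j : ℕ) := by
      intro h; exact hi (h ▸ j.2)
    simp [this]

private lemma vecMul_P {t T : ℕ} (htT : t < T) (P : Matrix (Fin T) (Fin t) ℝ)
    (hP : ∀ i j, P i j = if (i : ℕ) = (j : ℕ) then 1 else 0) (s : Fin T → ℝ) :
    Matrix.vecMul s P = fun j => s (Fin.castLE htT.le j) := by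
  funext j
  simp only [Matrix.vecMul, dotProduct, hP]
  rw [Finset.sum_eq_single (Fin.castLE htT.le j)]
  · simp
  · intro i _ hi
    have : (i : ℕ) ≠ (j : ℕ) := by
      intro h; exact hi (by ext; simp [h])
    simp [this]
  · simp

/-- Truncation invariance of the dynamic block: under extension consistency of
the sequence mixings (`R_T = P R_t Pᵀ`, `P = [I_t; 0]`) and padding invariance
of the normalization scalar (`ρ_T([z,0]) = ρ_t(z)`), the length-`T` output on a
history `X̃` equals the length-`t` output on its first `t` rows `X = Pᵀ X̃`,
where `h_ℓ(x;X) = x L¹(x) Xᵀ R_ℓ¹(x)`, `σ_ℓ(z) = ρ_ℓ(z)⁻¹ ReLU(z)`, and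
`o_ℓ(x;X) = σ_ℓ(h_ℓ(x;X)) R_ℓ²(x)ᵀ X L²(x)ᵀ`. -/
theorem truncation_invariance_dynamic_block {d t T : ℕ} (ht : 1 ≤ t) (htT : t < T)
    (L1 L2 : (Fin d → ℝ) → Matrix (Fin d) (Fin d) ℝ)
    (Rt1 Rt2 : (Fin d → ℝ) → Matrix (Fin t) (Fin t) ℝ)
    (RT1 RT2 : (Fin d → ℝ) → Matrix (Fin T) (Fin T) ℝ)
    (ρt : (Fin t → ℝ) → ℝ) (ρT : (Fin T → ℝ) → ℝ)
    (hρt : ∀ z, 0 < ρt z) (hρT : ∀ z, 0 < ρT z)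
    (P : Matrix (Fin T) (Fin t) ℝ)
    (hP : ∀ i j, P i j = if (i : ℕ) = (j : ℕ) then 1 else 0)
    (hpad : ∀ z : Fin t → ℝ,
      ρT (fun i => if hi : (i : ℕ) < t then z ⟨(i : ℕ), hi⟩ else 0) = ρt z)
    (hext1 : ∀ x, RT1 x = P * Rt1 x * Pᵀ)
    (hext2 : ∀ x, RT2 x = P * Rt2 x * Pᵀ)
    (x : Fin d → ℝ) (Xbig : Matrix (Fin T) (Fin d) ℝ) :
    letI X : Matrix (Fin t) (Fin d) ℝ := Pᵀ * Xbig
    letI hT : Fin T → ℝ :=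
      Matrix.vecMul (Matrix.vecMul (Matrix.vecMul x (L1 x)) Xbigᵀ) (RT1 x)
    letI hsmall : Fin t → ℝ :=
      Matrix.vecMul (Matrix.vecMul (Matrix.vecMul x (L1 x)) Xᵀ) (Rt1 x)
    Matrix.vecMul ((ρT hT)⁻¹ • fun i => max 0 (hT i)) ((RT2 x)ᵀ * Xbig * (L2 x)ᵀ)
      = Matrix.vecMul ((ρt hsmall)⁻¹ • fun i => max 0 (hsmall i))
          ((Rt2 x)ᵀ * X * (L2 x)ᵀ) := by
  set X : Matrix (Fin t) (Fin d) ℝ := Pᵀ * Xbig with hX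
  set hTv : Fin T → ℝ :=
    Matrix.vecMul (Matrix.vecMul (Matrix.vecMul x (L1 x)) Xbigᵀ) (RT1 x) with hhT
  set hsmall : Fin t → ℝ :=
    Matrix.vecMul (Matrix.vecMul (Matrix.vecMul x (L1 x)) Xᵀ) (Rt1 x) with hhs
  set u : Fin d → ℝ := Matrix.vecMul x (L1 x) with hu
  -- hsmall rewritten
  have hXt : Xᵀ = Xbigᵀ * P := by
    simp [X, Matrix.transpose_mul]
  have hsm : hsmall = Matrix.vecMul (Matrix.vecMul (Matrix.vecMul u Xbigᵀ) P) (Rt1 x) := by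
    rw [hhs, hXt, ← Matrix.vecMul_vecMul]
  have hTeq : hTv = Matrix.vecMul hsmall Pᵀ := by
    rw [hhT, hext1, hsm]
    simp only [← Matrix.vecMul_vecMul]
  have hpadT : hTv = fun i : Fin T => if hi : (i : ℕ) < t then hsmall ⟨(i : ℕ), hi⟩ else 0 := by
    rw [hTeq, vecMul_padP htT P hP]
  have hρ : ρT hTv = ρt hsmall := by rw [hpadT, hpad]
  set c : ℝ := (ρt hsmall)⁻¹ with hc
  set s : Fin T → ℝ := (ρT hTv)⁻¹ • fun i => max 0 (hTv i) with hs
  have hsP : Matrix.vecMul s P = c • fun i => max 0 (hsmall i) := by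
    rw [vecMul_P htT P hP]
    funext j
    have hj : ((Fin.castLE htT.le j : Fin T) : ℕ) < t := j.2
    have hv : hTv (Fin.castLE htT.le j) = hsmall j := by
      rw [hpadT]; simp [hj]
    simp only [hs, Pi.smul_apply, smul_eq_mul, hρ, hc, hv]
  have hR2 : (RT2 x)ᵀ = P * (Rt2 x)ᵀ * Pᵀ := by
    rw [hext2]; simp [Matrix.transpose_mul, Matrix.mul_assoc]
  rw [hR2, hX]
  simp only [← Matrix.vecMul_vecMul]
  rw [hsP]
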